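/- For every integer p ≥ 1 and every m ≥ 0, the exponential generating function of the m-th column of the p-th power of the inverse Stirling matrix satisfies, in the ring of formal power series ℝ⟦X⟧: Σ_{n=0}^∞ S^{−p}_{n,m}·X^n/n! = (σ^{−p})^m/m!, where σ^{−p} is the p-fold compositional iterate of log(1+X). -/

import Mathlib

/-- Signed Stirling numbers of the first kind:
`s(0,0) = 1`, `s(n+1,m) = s(n,m-1) - n·s(n,m)`. -/
def s1 : ℕ → ℕ → ℤ
  | 0, 0 => 1
  | 0, _ + 1 => 0
  | n + 1, 0 => -(n : ℤ) * s1 n 0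
  | n + 1, m + 1 => s1 n m - (n : ℤ) * s1 n (m + 1)

/-- Entries `S^{-p}_{n,m}` of the `p`-th power of the inverse Stirling matrix
(for `p ≥ 1`; the value at `p = 0` is junk). -/
def Snp : ℕ → ℕ → ℕ → ℤ
  | 0, _, _ => 0
  | 1, n, m => s1 n m
  | p + 2, n, m => ∑ k ∈ Finset.range (n + 1), s1 n k * Snp (p + 1) k m

/-- Composition `f ∘ g` of formal power series (the intended meaning when `g` has zero
constant term, in which case `coeff n (g ^ k) = 0` for `k > n`). -/
noncomputable def PSComp (f g : PowerSeries ℝ) : PowerSeries ℝ :=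
  PowerSeries.mk fun n =>
    ∑ k ∈ Finset.range (n + 1), (PowerSeries.coeff (R := ℝ) k f) * (PowerSeries.coeff (R := ℝ) n (g ^ k))

/-- `log(1+X) = ∑_{n ≥ 1} (-1)^{n+1} X^n / n` as a formal power series over `ℝ`. -/
noncomputable def logOnePlusX : PowerSeries ℝ :=
  PowerSeries.mk fun n => if n = 0 then 0 else (-1 : ℝ) ^ (n + 1) / n

/-- `σ^{-p}`, the `p`-fold compositional iterate of `log(1+X)` (with `σ^0 = X`). -/
noncomputable def sigmaNP : ℕ → PowerSeries ℝ
  | 0 => PowerSeries.X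
  | p + 1 => PSComp (sigmaNP p) logOnePlusX

open PowerSeries

/-! ### Auxiliary lemmas -/

lemma coeff_pow_zero_of_lt {h : PowerSeries ℝ} (hh : constantCoeff h = 0) :
    ∀ i a : ℕ, a < i → PowerSeries.coeff a (h ^ i) = 0 := by
  intro i
  induction i with
  | zero => intro a ha; omega
  | succ i ih =>
    intro a ha
    rw [pow_succ', PowerSeries.coeff_mul]
    apply Finset.sum_eq_zero
    rintro ⟨x, y⟩ hxy
    rw [Finset.HasAntidiagonal.mem_antidiagonal] at hxy
    rcases Nat.eq_zero_or_pos x with hx | hx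
    · subst hx
      simpa [PowerSeries.coeff_zero_eq_constantCoeff] using Or.inl hh
    · have : y < i := by omega
      rw [ih y this, mul_zero]

lemma coeff_PSComp (f g : PowerSeries ℝ) (n : ℕ) :
    PowerSeries.coeff n (PSComp f g) =
      ∑ k ∈ Finset.range (n + 1), (PowerSeries.coeff k f) * (PowerSeries.coeff n (g ^ k)) :=
  PowerSeries.coeff_mk _ _

lemma PSComp_one (g : PowerSeries ℝ) : PSComp 1 g = 1 := by
  ext n
  rw [coeff_PSComp]
  rw [Finset.sum_eq_single 0]
  · simp
  · intro k hk hk0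
    simp [PowerSeries.coeff_one, hk0]
  · simp

lemma PSComp_mul (f g h : PowerSeries ℝ) (hh : PowerSeries.constantCoeff h = 0) :
    PSComp (f * g) h = PSComp f h * PSComp g h := by
  ext n
  rw [coeff_PSComp, PowerSeries.coeff_mul]
  set F : ℕ → ℝ := fun i => PowerSeries.coeff i f with hF
  set G : ℕ → ℝ := fun j => PowerSeries.coeff j g with hG
  set H : ℕ → ℕ → ℝ := fun i a => PowerSeries.coeff a (h ^ i) with hH
  have hvan : ∀ i a : ℕ, a < i → H i a = 0 := fun i a hlt => coeff_pow_zero_of_lt hh i a hlt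
  have hLHS : (∑ k ∈ Finset.range (n + 1),
      (PowerSeries.coeff k (f * g)) * (PowerSeries.coeff n (h ^ k))) =
      ∑ p ∈ Finset.range (n + 1) ×ˢ Finset.range (n + 1),
        F p.1 * G p.2 * H (p.1 + p.2) n := by
    have h1 : ∀ k ∈ Finset.range (n + 1),
        (PowerSeries.coeff k (f * g)) * (PowerSeries.coeff n (h ^ k)) =
        ∑ p ∈ Finset.HasAntidiagonal.antidiagonal k, F p.1 * G p.2 * H (p.1 + p.2) n := by
      intro k hk
      rw [PowerSeries.coeff_mul, Finset.sum_mul]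
      apply Finset.sum_congr rfl
      intro p hp
      rw [Finset.HasAntidiagonal.mem_antidiagonal] at hp
      rw [hp]
    rw [Finset.sum_congr rfl h1]
    rw [← Finset.sum_biUnion]
    · apply Finset.sum_subset
      · intro p hp
        rw [Finset.mem_biUnion] at hp
        obtain ⟨k, hk, hpk⟩ := hp
        rw [Finset.HasAntidiagonal.mem_antidiagonal] at hpk
        rw [Finset.mem_range] at hk
        rw [Finset.mem_product, Finset.mem_range, Finset.mem_range]
        omega
      · intro p hp hnp
        have : n < p.1 + p.2 := by
          by_contra hc
          push_neg at hc
          exact hnp (Finset.mem_biUnion.2 ⟨p.1 + p.2, Finset.mem_range.2 (by omega),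
            Finset.HasAntidiagonal.mem_antidiagonal.2 rfl⟩)
        rw [hvan _ _ this, mul_zero]
    · intro a ha b hb hab
      simp only [Finset.disjoint_left]
      intro p hpa hpb
      rw [Finset.HasAntidiagonal.mem_antidiagonal] at hpa hpb
      exact hab (hpa ▸ hpb)
  rw [hLHS]
  have hR : ∀ p : ℕ × ℕ, p ∈ Finset.HasAntidiagonal.antidiagonal n →
      (PowerSeries.coeff p.1 (PSComp f h)) * (PowerSeries.coeff p.2 (PSComp g h)) =
      ∑ i ∈ Finset.range (n + 1), ∑ j ∈ Finset.range (n + 1),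
        F i * G j * (H i p.1 * H j p.2) := by
    intro p hp
    rw [Finset.HasAntidiagonal.mem_antidiagonal] at hp
    rw [coeff_PSComp, coeff_PSComp]
    have e1 : (∑ k ∈ Finset.range (p.1 + 1), F k * H k p.1) =
        ∑ k ∈ Finset.range (n + 1), F k * H k p.1 := by
      apply Finset.sum_subset
      · intro k hk; rw [Finset.mem_range] at *; omega
      · intro k _ hk
        rw [Finset.mem_range] at hk
        rw [hvan k p.1 (by omega), mul_zero]
    have e2 : (∑ k ∈ Finset.range (p.2 + 1), G k * H k p.2) =
        ∑ k ∈ Finset.range (n + 1), G k * H k p.2 := by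
      apply Finset.sum_subset
      · intro k hk; rw [Finset.mem_range] at *; omega
      · intro k _ hk
        rw [Finset.mem_range] at hk
        rw [hvan k p.2 (by omega), mul_zero]
    rw [e1, e2, Finset.sum_mul_sum]
    apply Finset.sum_congr rfl; intro i _
    apply Finset.sum_congr rfl; intro j _
    ring
  rw [Finset.sum_congr rfl hR, Finset.sum_comm]
  rw [Finset.sum_product]
  apply Finset.sum_congr rfl
  intro i _
  rw [Finset.sum_comm]
  apply Finset.sum_congr rfl
  intro j _
  have : H (i + j) n = ∑ p ∈ Finset.HasAntidiagonal.antidiagonal n, H i p.1 * H j p.2 := by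
    simp only [hH, pow_add, PowerSeries.coeff_mul]
  simp only []
  rw [this, Finset.mul_sum]

lemma PSComp_pow (f h : PowerSeries ℝ) (hh : PowerSeries.constantCoeff h = 0) (m : ℕ) :
    PSComp (f ^ m) h = (PSComp f h) ^ m := by
  induction m with
  | zero => simpa using PSComp_one h
  | succ m ih => rw [pow_succ, pow_succ, PSComp_mul _ _ _ hh, ih]

lemma constantCoeff_L : constantCoeff logOnePlusX = 0 := by
  have : constantCoeff logOnePlusX = coeff 0 logOnePlusX := by
    rw [coeff_zero_eq_constantCoeff]
  rw [this, logOnePlusX, coeff_mk]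
  simp

lemma coeff_derivativeFun_R (f : ℝ⟦X⟧) (n : ℕ) :
    coeff n (derivativeFun f) = coeff (n + 1) f * (n + 1) :=
  coeff_derivative f n

lemma one_add_X_mul_dL : (1 + X : ℝ⟦X⟧) * (derivativeFun logOnePlusX) = 1 := by
  ext n
  rw [add_mul, one_mul, map_add]
  cases n with
  | zero =>
    have hd : constantCoeff (derivativeFun logOnePlusX) = 1 := by
      rw [← coeff_zero_eq_constantCoeff_apply, coeff_derivativeFun_R, logOnePlusX, coeff_mk]
      norm_num
    simp [hd]
  | succ n =>
    rw [coeff_succ_X_mul, coeff_derivativeFun_R, coeff_derivativeFun_R,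
      logOnePlusX, coeff_mk, coeff_mk, coeff_one]
    simp only [Nat.succ_ne_zero, if_false, Nat.add_eq_zero]
    have h1 : ((n:ℝ) + 1) ≠ 0 := by positivity
    have h2 : ((n:ℝ) + 2) ≠ 0 := by positivity
    push_cast
    field_simp
    ring

lemma derivativeFun_pow_succ (f : ℝ⟦X⟧) (m : ℕ) :
    derivativeFun (f ^ (m + 1)) = C ((m : ℝ) + 1) * f ^ m * derivativeFun f := by
  induction m with
  | zero => simp
  | succ m ih =>
    have : f ^ (m + 2) = f * f ^ (m + 1) := by ring
    rw [this, derivativeFun_mul, ih, smul_eq_mul, smul_eq_mul]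
    have hC : (C ((m : ℝ) + 1 + 1)) = C ((m : ℝ) + 1) + 1 := by
      rw [map_add, map_one]
    push_cast
    rw [hC]
    ring

lemma key_recurrence (m n : ℕ) :
    ((n : ℝ) + 1) * coeff (n + 1) (logOnePlusX ^ (m + 1)) +
      (n : ℝ) * coeff n (logOnePlusX ^ (m + 1)) =
    ((m : ℝ) + 1) * coeff n (logOnePlusX ^ m) := by
  set L := logOnePlusX
  have h1 : (1 + X : ℝ⟦X⟧) * derivativeFun (L ^ (m + 1)) = C ((m : ℝ) + 1) * L ^ m := by
    rw [derivativeFun_pow_succ]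
    calc (1 + X : ℝ⟦X⟧) * (C ((m : ℝ) + 1) * L ^ m * derivativeFun L)
        = C ((m : ℝ) + 1) * L ^ m * ((1 + X) * derivativeFun L) := by ring
      _ = C ((m : ℝ) + 1) * L ^ m := by rw [one_add_X_mul_dL, mul_one]
  have h2 := congrArg (coeff n) h1
  rw [add_mul, one_mul, map_add, coeff_C_mul, coeff_derivativeFun_R] at h2
  have hx : coeff n (X * derivativeFun (L ^ (m + 1))) =
      (n : ℝ) * coeff n (L ^ (m + 1)) := by
    cases n with
    | zero =>
      rw [coeff_zero_eq_constantCoeff]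
      simp
    | succ k =>
      rw [coeff_succ_X_mul, coeff_derivativeFun_R]
      push_cast
      ring
  rw [hx] at h2
  linarith [h2]

lemma s1_succ_zero (n : ℕ) : s1 (n + 1) 0 = 0 := by
  induction n with
  | zero => simp [s1]
  | succ n ih => rw [s1, ih, mul_zero]

lemma coeff_L_pow (m n : ℕ) :
    coeff n (logOnePlusX ^ m) = (m.factorial : ℝ) * (s1 n m : ℝ) / (n.factorial : ℝ) := by
  induction m generalizing n with
  | zero =>
    cases n with
    | zero => simp [s1]
    | succ n =>
      rw [pow_zero, coeff_one, s1_succ_zero]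
      simp
  | succ m ih =>
    induction n with
    | zero =>
      rw [coeff_zero_eq_constantCoeff, map_pow, constantCoeff_L]
      rw [zero_pow (Nat.succ_ne_zero m)]
      simp [s1]
    | succ n ihn =>
      have hk := key_recurrence m n
      rw [ih n, ihn] at hk
      have hn1 : ((n : ℝ) + 1) ≠ 0 := by positivity
      have hnf : ((n.factorial : ℝ)) ≠ 0 := Nat.cast_ne_zero.2 n.factorial_ne_zero
      have hrec : (s1 (n + 1) (m + 1) : ℝ) = (s1 n m : ℝ) - (n : ℝ) * (s1 n (m + 1) : ℝ) := by
        rw [s1]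
        push_cast
        ring
      have hfac : ((n + 1).factorial : ℝ) = ((n : ℝ) + 1) * (n.factorial : ℝ) := by
        rw [Nat.factorial_succ]
        push_cast
        ring
      have hfacm : ((m + 1).factorial : ℝ) = ((m : ℝ) + 1) * (m.factorial : ℝ) := by
        rw [Nat.factorial_succ]
        push_cast
        ring
      rw [hfacm] at hk
      rw [hfac, hfacm, hrec]
      field_simp at hk ⊢
      linear_combination hk

lemma PSComp_X (g : PowerSeries ℝ) (hg : PowerSeries.constantCoeff g = 0) :
    PSComp PowerSeries.X g = g := by
  ext n
  rw [coeff_PSComp]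
  rw [Finset.sum_eq_single 1]
  · simp
  · intro k _ hk1
    rw [PowerSeries.coeff_X, if_neg hk1, zero_mul]
  · intro h1
    rw [Finset.mem_range] at h1
    have hn : n = 0 := by omega
    subst hn
    simp [PowerSeries.coeff_zero_eq_constantCoeff, hg]

lemma sigmaNP_one : sigmaNP 1 = logOnePlusX := by
  show PSComp PowerSeries.X logOnePlusX = logOnePlusX
  exact PSComp_X _ constantCoeff_L

lemma coeff_sigmaNP_pow (p m n : ℕ) :
    coeff n ((sigmaNP (p + 1)) ^ m) =
      (m.factorial : ℝ) * (Snp (p + 1) n m : ℝ) / (n.factorial : ℝ) := by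
  induction p generalizing n with
  | zero =>
    rw [sigmaNP_one, coeff_L_pow]
    rfl
  | succ p ih =>
    have hstep : sigmaNP (p + 2) = PSComp (sigmaNP (p + 1)) logOnePlusX := rfl
    rw [hstep, ← PSComp_pow _ _ constantCoeff_L, coeff_PSComp]
    have hterm : ∀ k ∈ Finset.range (n + 1),
        coeff k ((sigmaNP (p + 1)) ^ m) * coeff n (logOnePlusX ^ k) =
        (m.factorial : ℝ) * ((s1 n k : ℝ) * (Snp (p + 1) k m : ℝ)) / (n.factorial : ℝ) := by
      intro k _
      rw [ih k, coeff_L_pow]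
      have hkf : ((k.factorial : ℝ)) ≠ 0 := Nat.cast_ne_zero.2 k.factorial_ne_zero
      have hnf : ((n.factorial : ℝ)) ≠ 0 := Nat.cast_ne_zero.2 n.factorial_ne_zero
      field_simp
    rw [Finset.sum_congr rfl hterm]
    have hSnp : (Snp (p + 2) n m : ℝ) =
        ∑ k ∈ Finset.range (n + 1), (s1 n k : ℝ) * (Snp (p + 1) k m : ℝ) := by
      show ((∑ k ∈ Finset.range (n + 1), s1 n k * Snp (p + 1) k m : ℤ) : ℝ) = _
      push_cast
      rfl
    rw [hSnp, Finset.mul_sum, Finset.sum_div]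

/-- The EGF of the `m`-th column of the `p`-th power of the inverse Stirling matrix is
`(σ^{-p})^m / m!`. -/
theorem egf_column_inverse_Stirling_power (p m : ℕ) (hp : 1 ≤ p) :
    (PowerSeries.mk fun n => (Snp p n m : ℝ) / n.factorial) =
      PowerSeries.C (R := ℝ) (1 / m.factorial) * (sigmaNP p) ^ m := by
  obtain ⟨q, rfl⟩ : ∃ q, p = q + 1 := ⟨p - 1, by omega⟩
  ext n
  rw [PowerSeries.coeff_mk, PowerSeries.coeff_C_mul, coeff_sigmaNP_pow]
  have hmf : ((m.factorial : ℝ)) ≠ 0 := Nat.cast_ne_zero.2 m.factorial_ne_zero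
  field_simp
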